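/- For odd t ≥ 5, if F is a uniquely C_t-saturated graph having two blocks G' and G'' isomorphic to the same graph G sharing a cut-vertex x (with x corresponding to the same vertex of G in both copies), then for every vertex y of G other than x there is exactly one path on (t+1)/2 vertices in G with endpoints y and x. -/

import Mathlib

open SimpleGraph

/-- `G` has a cycle on `t` vertices (a cycle of length `t`). -/
def HasCycleOn {V : Type*} (G : SimpleGraph V) (t : ℕ) : Prop :=
  ∃ (v : V) (w : G.Walk v v), w.IsCycle ∧ w.length = t

/-- `c` is the edge set of some cycle on `t` vertices in `G`. -/
def IsCtEdgeSet {V : Type*} (G : SimpleGraph V) (t : ℕ) (c : Set (Sym2 V)) : Prop :=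
  ∃ (v : V) (w : G.Walk v v), w.IsCycle ∧ w.length = t ∧ {e | e ∈ w.edges} = c

/-- `G` is uniquely `C_t`-saturated: it has no cycle on `t` vertices, and adding any
edge of the complement creates exactly one cycle on `t` vertices. -/
def UniquelyCSat {V : Type*} (G : SimpleGraph V) (t : ℕ) : Prop :=
  ¬ HasCycleOn G t ∧
    ∀ x y : V, x ≠ y → ¬ G.Adj x y →
      ∃! c : Set (Sym2 V), IsCtEdgeSet (G ⊔ fromEdgeSet {s(x, y)}) t c

/-- The set `s` induces a block of `G`: a maximal set of vertices inducing a
connected subgraph with no cut-vertex. -/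
def IsBlock {V : Type*} (G : SimpleGraph V) (s : Set V) : Prop :=
  s.Nonempty ∧ (G.induce s).Connected ∧
    (∀ v ∈ s, (G.induce (s \ {v})).Preconnected) ∧
    ∀ u : Set V, s ⊆ u →
      ((G.induce u).Connected ∧ ∀ v ∈ u, (G.induce (u \ {v})).Preconnected) → u = s

/-- `G` is 2-connected: it has at least 3 vertices, is connected, and removing any
single vertex leaves a connected graph. -/
def TwoConnected {V : Type*} [Fintype V] (G : SimpleGraph V) : Prop :=
  3 ≤ Fintype.card V ∧ G.Connected ∧
    ∀ v : V, (G.induce ({v}ᶜ : Set V)).Connected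

namespace Stmt18Aux

open SimpleGraph Walk

variable {W V : Type*} {F : SimpleGraph W} {G : SimpleGraph V}

lemma mem_support_of_mem_edges' {a b : W} {p : F.Walk a b} {ed : Sym2 W} {z : W}
    (he : ed ∈ p.edges) (hz : z ∈ ed) : z ∈ p.support := by
  induction ed with
  | _ c d =>
    rcases Sym2.mem_iff.mp hz with rfl | rfl
    · exact p.fst_mem_support_of_mem_edges he
    · exact p.snd_mem_support_of_mem_edges he

/-- In a path, any edge incident to the initial vertex is the first edge. -/
lemma first_edge {u v w : W} (p : F.Walk u v) (hp : p.IsPath)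
    (he : s(u, w) ∈ p.edges) :
    ∃ (h : F.Adj u w) (r : F.Walk w v), p = Walk.cons h r := by
  cases p with
  | nil => simp at he
  | @cons _ z _ h' r' =>
    rw [Walk.edges_cons, List.mem_cons] at he
    rcases he with he | he
    · rw [Sym2.eq_iff] at he
      rcases he with ⟨-, rfl⟩ | ⟨h1, h2⟩
      · exact ⟨h', r', rfl⟩
      · exact absurd h1 h'.ne
    · have := r'.fst_mem_support_of_mem_edges he
      rw [Walk.cons_isPath_iff] at hp
      exact absurd this hp.2

/-- A path between two vertices is determined by its edge set. -/
lemma path_eq_of_edges : ∀ {u v : V} (p q : G.Walk u v), p.IsPath → q.IsPath →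
    (∀ e, e ∈ p.edges ↔ e ∈ q.edges) → p = q := by
  intro u v p
  induction p with
  | nil =>
    intro q _ hq hiff
    have : q.edges = [] := by
      cases hqe : q.edges with
      | nil => rfl
      | cons e l => exact absurd ((hiff e).mpr (by rw [hqe]; exact List.mem_cons_self)) (by simp)
    cases q with
    | nil => rfl
    | cons h r => simp at this
  | @cons u z v h' r' ih =>
    intro q hp hq hiff
    have hmem : s(u, z) ∈ q.edges := (hiff _).mp (by simp)
    obtain ⟨hadj, r'', rfl⟩ := first_edge q hq hmem
    have hr : r' = r'' := by
      apply ih r'' hp.of_cons hq.of_cons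
      intro e
      constructor
      · intro hee
        have h2 := (hiff e).mp (by simp [hee])
        rcases List.mem_cons.mp h2 with rfl | h2
        · exact absurd (r'.fst_mem_support_of_mem_edges hee) (Walk.cons_isPath_iff _ _ |>.mp hp).2
        · exact h2
      · intro hee
        have h2 := (hiff e).mpr (by simp [hee])
        rcases List.mem_cons.mp h2 with rfl | h2
        · exact absurd (r''.fst_mem_support_of_mem_edges hee) (Walk.cons_isPath_iff _ _ |>.mp hq).2
        · exact h2
    subst hr
    rfl

/-- Restrict a walk whose support lies in `A` to the induced subgraph on `A`. -/
def induceWalk {A : Set W} : ∀ {a b : W} (w : F.Walk a b), (∀ z ∈ w.support, z ∈ A) →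
    ∀ (ha : a ∈ A) (hb : b ∈ A), (F.induce A).Walk ⟨a, ha⟩ ⟨b, hb⟩
  | _, _, Walk.nil, _, _, _ => Walk.nil
  | _, _, @Walk.cons _ _ _ c _ h w, hw, ha, hb =>
      Walk.cons (by exact h)
        (induceWalk w (fun z hz => hw z (List.mem_cons_of_mem _ hz))
          (hw c (by simp)) hb)

lemma induceWalk_map {A : Set W} : ∀ {a b : W} (w : F.Walk a b) (hw : ∀ z ∈ w.support, z ∈ A)
    (ha : a ∈ A) (hb : b ∈ A),
    (induceWalk w hw ha hb).map (SimpleGraph.Embedding.induce A).toHom = w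
  | _, _, Walk.nil, _, _, _ => rfl
  | _, _, @Walk.cons _ _ _ c _ h w, hw, ha, hb => by
      simp only [induceWalk, Walk.map_cons]
      exact congrArg (Walk.cons h) (induceWalk_map w _ _ _)


/-- Reachability within the subgraph induced on `A`. -/
def Reach (F : SimpleGraph W) (A : Set W) (u v : W) : Prop :=
  ∃ (hu : u ∈ A) (hv : v ∈ A), (F.induce A).Reachable ⟨u, hu⟩ ⟨v, hv⟩

lemma Reach.trans {A : Set W} {u v z : W} (h1 : Reach F A u v) (h2 : Reach F A v z) :
    Reach F A u z := by
  obtain ⟨hu, hv, r1⟩ := h1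
  obtain ⟨hv', hz, r2⟩ := h2
  exact ⟨hu, hz, r1.trans r2⟩

lemma reach_of_walk {A : Set W} {a b : W} (w : F.Walk a b) (hw : ∀ z ∈ w.support, z ∈ A) :
    Reach F A a b :=
  ⟨hw a w.start_mem_support, hw b w.end_mem_support,
    ⟨induceWalk w hw (hw a w.start_mem_support) (hw b w.end_mem_support)⟩⟩

lemma Reach.mono {A B : Set W} (hAB : A ⊆ B) {u v : W} (h : Reach F A u v) :
    Reach F B u v := by
  obtain ⟨hu, hv, ⟨p⟩⟩ := h
  refine reach_of_walk (p.map (SimpleGraph.Embedding.induce A).toHom) ?_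
  intro z hz
  replace hz : z ∈ (p.map (SimpleGraph.Embedding.induce A).toHom).support := hz
  rw [Walk.support_map, List.mem_map] at hz
  obtain ⟨⟨z', hz'⟩, _, rfl⟩ := hz
  exact hAB hz'

lemma block_reach {s : Set W} (hs : IsBlock F s) {w c : W} (hw : w ∈ s) (hc : c ∈ s) :
    Reach F s w c :=
  ⟨hw, hc, hs.2.1.preconnected _ _⟩

lemma reach_block_del {s : Set W} (hs : IsBlock F s) {v w c : W} (hw : w ∈ s) (hwv : w ≠ v)
    (hc : c ∈ s) (hcv : c ≠ v) : Reach F (s \ {v}) w c := by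
  by_cases hv : v ∈ s
  · exact ⟨Set.mem_diff_singleton.mpr ⟨hw, hwv⟩, Set.mem_diff_singleton.mpr ⟨hc, hcv⟩,
      hs.2.2.1 v hv _ _⟩
  · rw [Set.diff_singleton_eq_self hv]
    exact block_reach hs hw hc

lemma preconnected_of_anchor {A : Set W} {α : W} (hα : α ∈ A)
    (h : ∀ w ∈ A, Reach F A w α) : (F.induce A).Preconnected := by
  rintro ⟨a, ha⟩ ⟨b, hb⟩
  obtain ⟨_, _, r1⟩ := h a ha
  obtain ⟨_, _, r2⟩ := h b hb
  exact r1.trans r2.symm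

variable [DecidableEq W]

/-- From a vertex of a path one can reach one of the endpoints avoiding `v`. -/
lemma endpoint_escape {a b v w : W} (R : F.Walk a b) (hR : R.IsPath) (hw : w ∈ R.support)
    (hwv : w ≠ v) :
    ∃ c, (c = a ∨ c = b) ∧ c ≠ v ∧
      ∃ P : F.Walk w c, v ∉ P.support ∧ ∀ z ∈ P.support, z ∈ R.support := by
  by_cases hv : v ∈ (R.takeUntil w hw).support
  · have hnd : R.support.Nodup := (Walk.isPath_def _).mp hR
    have hsup : R.support = (R.takeUntil w hw).support ++ (R.dropUntil w hw).support.tail := by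
      conv_lhs => rw [← R.take_spec hw]
      rw [Walk.support_append]
    have hvd : v ∉ (R.dropUntil w hw).support := by
      intro hmem
      rw [(R.dropUntil w hw).support_eq_cons] at hmem
      rcases List.mem_cons.mp hmem with rfl | hmem
      · exact hwv rfl
      · rw [hsup] at hnd
        exact (List.disjoint_of_nodup_append hnd) hv hmem
    refine ⟨b, Or.inr rfl, ?_, R.dropUntil w hw, hvd, fun z hz => R.support_dropUntil_subset hw hz⟩
    intro hbv
    exact hvd (hbv ▸ (R.dropUntil w hw).end_mem_support)
  · refine ⟨a, Or.inl rfl, ?_, (R.takeUntil w hw).reverse, ?_, ?_⟩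
    · intro hav
      exact hv (hav ▸ (R.takeUntil w hw).start_mem_support)
    · rwa [Walk.support_reverse, List.mem_reverse]
    · intro z hz
      rw [Walk.support_reverse, List.mem_reverse] at hz
      exact R.support_takeUntil_subset hw hz


/-- Every path between two vertices of a block stays inside the block. -/
lemma walk_in_block {s : Set W} (hs : IsBlock F s) {a b : W} (ha : a ∈ s) (hb : b ∈ s)
    (hab : a ≠ b) (R : F.Walk a b) (hR : R.IsPath) : ∀ z ∈ R.support, z ∈ s := by
  set u := s ∪ {z | z ∈ R.support} with hu
  have husub : s ⊆ u := Set.subset_union_left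
  have hmem : ∀ z ∈ R.support, z ∈ u := fun z hz => Or.inr hz
  have hau : a ∈ u := husub ha
  have hconn : (F.induce u).Connected := by
    rw [connected_iff]
    refine ⟨preconnected_of_anchor hau ?_, ⟨⟨a, hau⟩⟩⟩
    rintro w (hw | hw)
    · exact (block_reach hs hw ha).mono husub
    · exact reach_of_walk ((R.takeUntil w hw).reverse) (fun z hz => by
        rw [Walk.support_reverse, List.mem_reverse] at hz
        exact hmem z (R.support_takeUntil_subset hw hz))
  have hdel : ∀ v ∈ u, (F.induce (u \ {v})).Preconnected := by
    intro v hv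
    set α := if v = a then b else a with hα
    have hαs : α ∈ s := by rw [hα]; split <;> assumption
    have hαv : α ≠ v := by
      rw [hα]; split
      · rename_i hva; rw [hva]; exact hab.symm
      · rename_i hva; exact fun h => hva h.symm
    have hαu : α ∈ u \ {v} := Set.mem_diff_singleton.mpr ⟨husub hαs, hαv⟩
    apply preconnected_of_anchor hαu
    rintro w hwmem
    obtain ⟨hwu, hwv⟩ := Set.mem_diff_singleton.mp hwmem
    have hsub' : s \ {v} ⊆ u \ {v} := Set.diff_subset_diff_left husub
    rcases hwu with hws | hwR
    · exact (reach_block_del hs hws hwv hαs hαv).mono hsub'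
    · obtain ⟨c, hc, hcv, P, hvP, hPsub⟩ := endpoint_escape R hR hwR hwv
      have h1 : Reach F (u \ {v}) w c := reach_of_walk P (fun z hz =>
        Set.mem_diff_singleton.mpr ⟨hmem z (hPsub z hz), fun hzv => hvP (hzv ▸ hz)⟩)
      have hcs : c ∈ s := hc.elim (· ▸ ha) (· ▸ hb)
      exact h1.trans ((reach_block_del hs hcs hcv hαs hαv).mono hsub')
  have := hs.2.2.2 u husub ⟨hconn, hdel⟩
  intro z hz
  rw [← this]
  exact Or.inr hz

/-- Any walk between interior vertices of the two blocks passes through the cut vertex. -/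
lemma cross_through_cut {s₁ s₂ : Set W} (hs₁ : IsBlock F s₁) (hs₂ : IsBlock F s₂) {x : W}
    (hcap : s₁ ∩ s₂ = {x}) (hns : ¬ s₂ ⊆ s₁) {y₁ y₂ : W}
    (hy₁ : y₁ ∈ s₁) (hy₁x : y₁ ≠ x) (hy₂ : y₂ ∈ s₂) (hy₂x : y₂ ≠ x)
    (R : F.Walk y₁ y₂) : x ∈ R.support := by
  by_contra hx
  have hxs : x ∈ s₁ ∩ s₂ := hcap.symm ▸ rfl
  set R' := R.bypass with hR'def
  have hR' : R'.IsPath := R.bypass_isPath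
  have hx' : x ∉ R'.support := fun h => hx (R.support_bypass_subset h)
  have hy12 : y₁ ≠ y₂ := by
    intro h
    have : y₁ ∈ s₁ ∩ s₂ := ⟨hy₁, h ▸ hy₂⟩
    rw [hcap] at this
    exact hy₁x this
  set u := (s₁ ∪ s₂) ∪ {z | z ∈ R'.support} with hu
  have hsub₁ : s₁ ⊆ u := fun z hz => Or.inl (Or.inl hz)
  have hsub₂ : s₂ ⊆ u := fun z hz => Or.inl (Or.inr hz)
  have hmem : ∀ z ∈ R'.support, z ∈ u := fun z hz => Or.inr hz
  have hxu : x ∈ u := hsub₁ hxs.1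
  have hy₁u : y₁ ∈ u := hsub₁ hy₁
  have hconn : (F.induce u).Connected := by
    rw [connected_iff]
    refine ⟨preconnected_of_anchor hxu ?_, ⟨⟨x, hxu⟩⟩⟩
    rintro w ((hw | hw) | hw)
    · exact (block_reach hs₁ hw hxs.1).mono hsub₁
    · exact (block_reach hs₂ hw hxs.2).mono hsub₂
    · refine Reach.trans (u := w) (v := y₁) (z := x) ?_ ?_
      · exact reach_of_walk ((R'.takeUntil w hw).reverse) (fun z hz => by
          rw [Walk.support_reverse, List.mem_reverse] at hz
          exact hmem z (R'.support_takeUntil_subset hw hz))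
      · exact (block_reach hs₁ hy₁ hxs.1).mono hsub₁
  have hdel : ∀ v ∈ u, (F.induce (u \ {v})).Preconnected := by
    intro v hv
    have hsub₁' : s₁ \ {v} ⊆ u \ {v} := Set.diff_subset_diff_left hsub₁
    have hsub₂' : s₂ \ {v} ⊆ u \ {v} := Set.diff_subset_diff_left hsub₂
    by_cases hvx : v = x
    · subst hvx
      have hy₁A : y₁ ∈ u \ {v} := Set.mem_diff_singleton.mpr ⟨hy₁u, hy₁x⟩
      apply preconnected_of_anchor hy₁A
      rintro w hwmem
      obtain ⟨hwu, hwv⟩ := Set.mem_diff_singleton.mp hwmem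
      have hRreach : Reach F (u \ {v}) y₂ y₁ :=
        reach_of_walk R'.reverse (fun z hz => by
          rw [Walk.support_reverse, List.mem_reverse] at hz
          exact Set.mem_diff_singleton.mpr ⟨hmem z hz, fun h => hx' (h ▸ hz)⟩)
      rcases hwu with (hw | hw) | hw
      · exact (reach_block_del hs₁ hw hwv hy₁ hy₁x).mono hsub₁'
      · exact ((reach_block_del hs₂ hw hwv hy₂ hy₂x).mono hsub₂').trans hRreach
      · refine Reach.trans (u := w) (v := y₂) (z := y₁) ?_ hRreach
        exact reach_of_walk (R'.dropUntil w hw) (fun z hz => by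
          have hzR := R'.support_dropUntil_subset hw hz
          exact Set.mem_diff_singleton.mpr ⟨hmem z hzR, fun h => hx' (h ▸ hzR)⟩)
    · have hxA : x ∈ u \ {v} := Set.mem_diff_singleton.mpr ⟨hxu, fun h => hvx h.symm⟩
      have hxv : x ≠ v := fun h => hvx h.symm
      apply preconnected_of_anchor hxA
      rintro w hwmem
      obtain ⟨hwu, hwv⟩ := Set.mem_diff_singleton.mp hwmem
      rcases hwu with (hw | hw) | hw
      · exact (reach_block_del hs₁ hw hwv hxs.1 hxv).mono hsub₁'
      · exact (reach_block_del hs₂ hw hwv hxs.2 hxv).mono hsub₂'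
      · obtain ⟨c, hc, hcv, P, hvP, hPsub⟩ := endpoint_escape R' hR' hw hwv
        have h1 : Reach F (u \ {v}) w c := reach_of_walk P (fun z hz =>
          Set.mem_diff_singleton.mpr ⟨hmem z (hPsub z hz), fun hzv => hvP (hzv ▸ hz)⟩)
        refine h1.trans ?_
        rcases hc with rfl | rfl
        · exact (reach_block_del hs₁ hy₁ hcv hxs.1 hxv).mono hsub₁'
        · exact (reach_block_del hs₂ hy₂ hcv hxs.2 hxv).mono hsub₂'
  have := hs₁.2.2.2 u hsub₁ ⟨hconn, hdel⟩
  exact hns (this ▸ hsub₂)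


lemma isCycle_reverse {v : W} {w : F.Walk v v} (h : w.IsCycle) : w.reverse.IsCycle := by
  rw [Walk.isCycle_def] at h ⊢
  obtain ⟨ht, hn, hnd⟩ := h
  refine ⟨?_, ?_, ?_⟩
  · rw [Walk.isTrail_def, Walk.edges_reverse, List.nodup_reverse]
    exact ht.edges_nodup
  · intro hnil
    apply hn
    have := congrArg Walk.reverse hnil
    rwa [Walk.reverse_reverse] at this
  · cases w with
    | nil => exact absurd rfl hn
    | @cons _ z _ hadj rest =>
      have hrs : rest.reverse.support = v :: rest.reverse.support.tail :=
        rest.reverse.support_eq_cons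
      have hnodup : rest.reverse.support.Nodup := by
        rw [Walk.support_reverse, List.nodup_reverse]
        simpa using hnd
      have htl : (Walk.cons hadj rest).reverse.support.tail
          = rest.reverse.support.tail ++ [v] := by
        rw [Walk.reverse_cons, Walk.support_append]
        conv_lhs => rw [hrs]
        simp
      rw [htl]
      have hvnot : v ∉ rest.reverse.support.tail := by
        rw [hrs] at hnodup
        exact (List.nodup_cons.mp hnodup).1
      refine List.Nodup.append ?_ (List.nodup_singleton v) ?_
      · exact (List.tail_sublist _).nodup hnodup
      · intro z hz hz'
        rw [List.mem_singleton] at hz'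
        exact hvnot (hz' ▸ hz)

lemma induceWalk_length {A : Set W} {a b : W} (w : F.Walk a b) (hw : ∀ z ∈ w.support, z ∈ A)
    (ha : a ∈ A) (hb : b ∈ A) : (induceWalk w hw ha hb).length = w.length := by
  conv_rhs => rw [← induceWalk_map w hw ha hb]
  exact (Walk.length_map _ _).symm

lemma induceWalk_isPath {A : Set W} {a b : W} (w : F.Walk a b) (hw : ∀ z ∈ w.support, z ∈ A)
    (ha : a ∈ A) (hb : b ∈ A) (h : w.IsPath) : (induceWalk w hw ha hb).IsPath := by
  rw [Walk.isPath_def]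
  have := congrArg Walk.support (induceWalk_map w hw ha hb)
  rw [Walk.support_map] at this
  have hnd : ((induceWalk w hw ha hb).support.map
      ((SimpleGraph.Embedding.induce A).toHom : (F.induce A) →g F)).Nodup := by
    rw [this]; exact (Walk.isPath_def _).mp h
  exact hnd.of_map _

lemma pull_edges {A : Set W} (e : G ≃g F.induce A) (g : G →g F) (hg : ∀ z, g z = ↑(e z))
    {a b : W} (w : F.Walk a b) (hw : ∀ z ∈ w.support, z ∈ A) (ha : a ∈ A) (hb : b ∈ A) :
    (((induceWalk w hw ha hb).map e.symm.toHom).map g).edges = w.edges := by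
  rw [Walk.map_map]
  have hcoe : ⇑(g.comp e.symm.toHom)
      = ⇑((SimpleGraph.Embedding.induce A).toHom : (F.induce A) →g F) := by
    funext z
    show g (e.symm z) = _
    rw [hg, e.apply_symm_apply]
    rfl
  have key : ((induceWalk w hw ha hb).map (g.comp e.symm.toHom)).edges = w.edges := by
    rw [Walk.edges_map, hcoe, ← Walk.edges_map]
    exact congrArg Walk.edges (induceWalk_map w hw ha hb)
  exact key


lemma mkCycle {s₁ s₂ : Set W} {x : W} (hcap : s₁ ∩ s₂ = {x})
    (f₁ f₂ : G →g F)
    (hr₁ : ∀ z, f₁ z ∈ s₁) (hr₂ : ∀ z, f₂ z ∈ s₂)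
    {x₀ : V} (hx₁ : f₁ x₀ = x) (hx₂ : f₂ x₀ = x)
    (hf₁ : Function.Injective f₁) (hf₂ : Function.Injective f₂)
    {y : V} (hy : y ≠ x₀) {t : ℕ}
    (p q : G.Walk y x₀) (hp : p.IsPath) (hq : q.IsPath)
    (hlen : p.length + q.length + 1 = t) :
    IsCtEdgeSet (F ⊔ fromEdgeSet {s(f₁ y, f₂ y)}) t
      {ed | ed = s(f₁ y, f₂ y) ∨ ed ∈ (p.map f₁).edges ∨ ed ∈ (q.map f₂).edges} := by
  have hs12 : ∀ z, z ∈ s₁ → z ∈ s₂ → z = x := fun z h1 h2 => by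
    have : z ∈ s₁ ∩ s₂ := ⟨h1, h2⟩
    rwa [hcap] at this
  have h1x : f₁ y ≠ x := fun h => hy (hf₁ (h.trans hx₁.symm))
  have h2x : f₂ y ≠ x := fun h => hy (hf₂ (h.trans hx₂.symm))
  have h1s2 : f₁ y ∉ s₂ := fun h => h1x (hs12 _ (hr₁ y) h)
  have h2s1 : f₂ y ∉ s₁ := fun h => h2x (hs12 _ h (hr₂ y))
  have hne : f₂ y ≠ f₁ y := fun h => h2s1 (h ▸ hr₁ y)
  set F' := F ⊔ fromEdgeSet {s(f₁ y, f₂ y)} with hF'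
  have hle : F ≤ F' := le_sup_left
  have hadj : F'.Adj (f₂ y) (f₁ y) := by
    rw [hF', sup_adj, fromEdgeSet_adj]
    exact Or.inr ⟨by rw [Sym2.eq_swap]; exact rfl, hne⟩
  set A : F.Walk (f₁ y) x := (p.map f₁).copy rfl hx₁ with hA
  set B : F.Walk x (f₂ y) := ((q.map f₂).copy rfl hx₂).reverse with hB
  have hsupA : ∀ z ∈ A.support, z ∈ s₁ := by
    intro z hz
    rw [hA, Walk.support_copy, Walk.support_map, List.mem_map] at hz
    obtain ⟨z', _, rfl⟩ := hz
    exact hr₁ z'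
  have hsupB : ∀ z ∈ B.support, z ∈ s₂ := by
    intro z hz
    rw [hB, Walk.support_reverse, List.mem_reverse, Walk.support_copy, Walk.support_map,
      List.mem_map] at hz
    obtain ⟨z', _, rfl⟩ := hz
    exact hr₂ z'
  have hndA : A.support.Nodup := by
    rw [hA, Walk.support_copy, Walk.support_map]
    exact ((Walk.isPath_def p).mp hp).map hf₁
  have hndB : B.support.Nodup := by
    rw [hB, Walk.support_reverse, List.nodup_reverse, Walk.support_copy, Walk.support_map]
    exact ((Walk.isPath_def q).mp hq).map hf₂
  have hBx : B.support = x :: B.support.tail := B.support_eq_cons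
  have hxB : x ∉ B.support.tail := by
    rw [hBx] at hndB
    exact (List.nodup_cons.mp hndB).1
  set inner : F.Walk (f₁ y) (f₂ y) := A.append B with hinner
  have hndInner : inner.support.Nodup := by
    rw [hinner, Walk.support_append]
    refine List.Nodup.append hndA ((List.tail_sublist _).nodup hndB) ?_
    intro z hzA hzB
    have hz2 : z ∈ s₂ := hsupB z (by rw [hBx]; exact List.mem_cons_of_mem _ hzB)
    exact hxB ((hs12 z (hsupA z hzA) hz2) ▸ hzB)
  have hinnerPath : inner.IsPath := (Walk.isPath_def _).mpr hndInner
  have hedgesub : ∀ e ∈ inner.edges, e ∈ F'.edgeSet := fun e he =>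
    (edgeSet_mono hle) (inner.edges_subset_edgeSet he)
  set inner' := inner.transfer F' hedgesub with hinner'
  set c₀ : F'.Walk (f₂ y) (f₂ y) := Walk.cons hadj inner' with hc₀
  have hinner'Path : inner'.IsPath := hinnerPath.transfer _
  have hinedges : inner'.edges = A.edges ++ B.edges := by
    rw [hinner', Walk.edges_transfer, hinner, Walk.edges_append]
  have hnotmem : s(f₂ y, f₁ y) ∉ inner'.edges := by
    rw [hinedges]
    intro hmem
    rcases List.mem_append.mp hmem with h | h
    · exact h2s1 (hsupA _ (mem_support_of_mem_edges' h (Sym2.mem_iff.mpr (Or.inl rfl))))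
    · exact h1s2 (hsupB _ (mem_support_of_mem_edges' h (Sym2.mem_iff.mpr (Or.inr rfl))))
  have hcyc : c₀.IsCycle := (Walk.cons_isCycle_iff inner' hadj).mpr ⟨hinner'Path, hnotmem⟩
  have hlen₀ : c₀.length = t := by
    rw [hc₀, Walk.length_cons, hinner', Walk.length_transfer, hinner, Walk.length_append,
      hA, hB, Walk.length_copy, Walk.length_reverse, Walk.length_copy, Walk.length_map,
      Walk.length_map]
    omega
  refine ⟨f₂ y, c₀, hcyc, hlen₀, ?_⟩
  have hAe : A.edges = (p.map f₁).edges := by rw [hA, Walk.edges_copy]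
  have hBe : ∀ e, e ∈ B.edges ↔ e ∈ (q.map f₂).edges := by
    intro e
    rw [hB, Walk.edges_reverse, List.mem_reverse, Walk.edges_copy]
  ext ed
  simp only [Set.mem_setOf_eq]
  rw [hc₀, Walk.edges_cons]
  constructor
  · intro h
    rcases List.mem_cons.mp h with h | h
    · left; rw [h, Sym2.eq_swap]
    · rcases List.mem_append.mp (hinedges ▸ h) with h | h
      · right; left; rwa [hAe] at h
      · right; right; exact (hBe ed).mp h
  · rintro (rfl | h | h)
    · exact List.mem_cons.mpr (Or.inl (Sym2.eq_swap ▸ rfl))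
    · refine List.mem_cons_of_mem _ ?_
      rw [hinedges]
      exact List.mem_append.mpr (Or.inl (hAe ▸ h))
    · refine List.mem_cons_of_mem _ ?_
      rw [hinedges]
      exact List.mem_append.mpr (Or.inr ((hBe ed).mpr h))


lemma E_sub {s₁ s₂ : Set W} {x : W} (hcap : s₁ ∩ s₂ = {x})
    (f₁ f₂ : G →g F)
    (hr₁ : ∀ z, f₁ z ∈ s₁) (hr₂ : ∀ z, f₂ z ∈ s₂)
    {x₀ : V} (hx₁ : f₁ x₀ = x) (hx₂ : f₂ x₀ = x)
    (hf₁ : Function.Injective f₁) (hf₂ : Function.Injective f₂)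
    {y : V} (hy : y ≠ x₀)
    (p q p' q' : G.Walk y x₀)
    (h : {ed | ed = s(f₁ y, f₂ y) ∨ ed ∈ (p.map f₁).edges ∨ ed ∈ (q.map f₂).edges}
       ⊆ {ed | ed = s(f₁ y, f₂ y) ∨ ed ∈ (p'.map f₁).edges ∨ ed ∈ (q'.map f₂).edges}) :
    ∀ ed ∈ p.edges, ed ∈ p'.edges := by
  have hs12 : ∀ z, z ∈ s₁ → z ∈ s₂ → z = x := fun z h1 h2 => by
    have : z ∈ s₁ ∩ s₂ := ⟨h1, h2⟩
    rwa [hcap] at this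
  have h2x : f₂ y ≠ x := fun hh => hy (hf₂ (hh.trans hx₂.symm))
  have h2s1 : f₂ y ∉ s₁ := fun hh => h2x (hs12 _ hh (hr₂ y))
  intro ed hed
  induction ed with
  | _ a b =>
    have hGadj : G.Adj a b := p.adj_of_mem_edges hed
    have hmem : Sym2.map f₁ s(a, b) ∈
        {ed | ed = s(f₁ y, f₂ y) ∨ ed ∈ (p'.map f₁).edges ∨ ed ∈ (q'.map f₂).edges} := by
      apply h
      right; left
      rw [Walk.edges_map]
      exact List.mem_map_of_mem hed
    rcases hmem with hm | hm | hm
    · exfalso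
      rw [Sym2.map_pair_eq, Sym2.eq_iff] at hm
      rcases hm with ⟨-, hb⟩ | ⟨ha, -⟩
      · exact h2s1 (hb ▸ hr₁ b)
      · exact h2s1 (ha ▸ hr₁ a)
    · rw [Walk.edges_map] at hm
      rcases List.mem_map.mp hm with ⟨ed', hed', heq⟩
      rwa [← Sym2.map.injective hf₁ heq]
    · exfalso
      rw [Walk.edges_map] at hm
      rcases List.mem_map.mp hm with ⟨ed', hed', heq⟩
      induction ed' with
      | _ a' b' =>
        rw [Sym2.map_pair_eq, Sym2.map_pair_eq, Sym2.eq_iff] at heq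
        have hfa : f₁ a = x ∧ f₁ b = x := by
          rcases heq with ⟨h1, h2⟩ | ⟨h1, h2⟩
          · exact ⟨hs12 _ (hr₁ a) (h1 ▸ hr₂ a'), hs12 _ (hr₁ b) (h2 ▸ hr₂ b')⟩
          · exact ⟨hs12 _ (hr₁ a) (h2 ▸ hr₂ b'), hs12 _ (hr₁ b) (h1 ▸ hr₂ a')⟩
        have ha : a = x₀ := hf₁ (hfa.1.trans hx₁.symm)
        have hb : b = x₀ := hf₁ (hfa.2.trans hx₁.symm)
        exact hGadj.ne (ha.trans hb.symm)

lemma E_inj {s₁ s₂ : Set W} {x : W} (hcap : s₁ ∩ s₂ = {x})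
    (f₁ f₂ : G →g F)
    (hr₁ : ∀ z, f₁ z ∈ s₁) (hr₂ : ∀ z, f₂ z ∈ s₂)
    {x₀ : V} (hx₁ : f₁ x₀ = x) (hx₂ : f₂ x₀ = x)
    (hf₁ : Function.Injective f₁) (hf₂ : Function.Injective f₂)
    {y : V} (hy : y ≠ x₀)
    (p q p' q' : G.Walk y x₀) (hp : p.IsPath) (hp' : p'.IsPath)
    (h : {ed | ed = s(f₁ y, f₂ y) ∨ ed ∈ (p.map f₁).edges ∨ ed ∈ (q.map f₂).edges}
       = {ed | ed = s(f₁ y, f₂ y) ∨ ed ∈ (p'.map f₁).edges ∨ ed ∈ (q'.map f₂).edges}) :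
    p = p' := by
  apply path_eq_of_edges p p' hp hp'
  intro ed
  constructor
  · exact fun hh => E_sub hcap f₁ f₂ hr₁ hr₂ hx₁ hx₂ hf₁ hf₂ hy p q p' q' h.subset ed hh
  · exact fun hh => E_sub hcap f₁ f₂ hr₁ hr₂ hx₁ hx₂ hf₁ hf₂ hy p' q' p q h.symm.subset ed hh

/-- Split a cycle through the edge `s(y₁,y₂)` into that edge and a path. -/
lemma cycle_split {F' : SimpleGraph W} {y₁ y₂ : W} {w₁ : F'.Walk y₁ y₁}
    (hc : w₁.IsCycle) (he : s(y₁, y₂) ∈ w₁.edges) :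
    ∃ q : F'.Walk y₂ y₁, q.IsPath ∧ q.length + 1 = w₁.length ∧ s(y₁, y₂) ∉ q.edges ∧
      ∀ ed, ed ∈ w₁.edges ↔ (ed = s(y₁, y₂) ∨ ed ∈ q.edges) := by
  cases w₁ with
  | nil => exact absurd rfl hc.ne_nil
  | @cons _ z _ hadj rest =>
    rw [Walk.edges_cons] at he
    have hpr := (Walk.cons_isCycle_iff rest hadj).mp hc
    by_cases hz : z = y₂
    · subst hz
      refine ⟨rest, hpr.1, by simp [Walk.length_cons], hpr.2, fun ed => ?_⟩
      rw [Walk.edges_cons]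
      constructor
      · intro hh
        rcases List.mem_cons.mp hh with hh | hh
        · exact Or.inl hh
        · exact Or.inr hh
      · rintro (rfl | hh)
        · exact List.mem_cons_self
        · exact List.mem_cons_of_mem _ hh
    · have hin : s(y₁, y₂) ∈ rest.edges := by
        rcases List.mem_cons.mp he with hh | hh
        · exfalso
          rw [Sym2.eq_iff] at hh
          rcases hh with ⟨-, h2⟩ | ⟨h1, -⟩
          · exact hz h2.symm
          · exact hadj.ne h1
        · exact hh
      obtain ⟨hadj₂, r₂, hr₂⟩ := first_edge rest.reverse hpr.1.reverse
        (by rw [Walk.edges_reverse, List.mem_reverse]; exact hin)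
      have hw2 : (Walk.cons hadj rest).reverse
          = Walk.cons hadj₂ (r₂.append (Walk.cons hadj.symm Walk.nil)) := by
        rw [Walk.reverse_cons, hr₂, Walk.cons_append]
      have hcyc2 := isCycle_reverse hc
      rw [hw2] at hcyc2
      have h2 := (Walk.cons_isCycle_iff _ hadj₂).mp hcyc2
      refine ⟨r₂.append (Walk.cons hadj.symm Walk.nil), h2.1, ?_, h2.2, fun ed => ?_⟩
      · have hlen2 := congrArg Walk.length hw2
        rw [Walk.length_reverse] at hlen2
        rw [hlen2, Walk.length_cons]
      · have hrev : ∀ ed', ed' ∈ (Walk.cons hadj rest).edges ↔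
            ed' ∈ (Walk.cons hadj₂ (r₂.append (Walk.cons hadj.symm Walk.nil))).edges := by
          intro ed'
          rw [← hw2, Walk.edges_reverse, List.mem_reverse]
        rw [hrev ed, Walk.edges_cons]
        constructor
        · intro hh
          rcases List.mem_cons.mp hh with hh | hh
          · exact Or.inl hh
          · exact Or.inr hh
        · rintro (rfl | hh)
          · exact List.mem_cons_self
          · exact List.mem_cons_of_mem _ hh

end Stmt18Aux

open Stmt18Aux

/-- For odd `t ≥ 5`: if a uniquely `C_t`-saturated graph `F` has two distinct blocks,
both isomorphic to a 2-connected graph `G`, meeting exactly in a cut-vertex `x` that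
corresponds to the same vertex `x₀` of `G` under both isomorphisms, then every vertex
`y ≠ x₀` of `G` is joined to `x₀` by exactly one path on `(t+1)/2` vertices in `G`. -/
theorem stmt_18 {W V : Type*} [Fintype W] [Fintype V] (F : SimpleGraph W)
    (G : SimpleGraph V) (t : ℕ) (ht : 5 ≤ t) (htodd : Odd t)
    (hF : UniquelyCSat F t) (hG2 : TwoConnected G)
    (s₁ s₂ : Set W) (hs₁ : IsBlock F s₁) (hs₂ : IsBlock F s₂) (hne : s₁ ≠ s₂)
    (x : W) (hcap : s₁ ∩ s₂ = {x})
    (hcut : ¬ (F.induce ({x}ᶜ : Set W)).Connected)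
    (x₀ : V) (e₁ : G ≃g F.induce s₁) (e₂ : G ≃g F.induce s₂)
    (he₁ : ((e₁ x₀ : s₁) : W) = x) (he₂ : ((e₂ x₀ : s₂) : W) = x) :
    ∀ y : V, y ≠ x₀ →
      ∃! p : G.Walk y x₀, p.IsPath ∧ p.length = (t + 1) / 2 - 1 := by
  classical
  intro y hy
  obtain ⟨k, hk⟩ := htodd
  have hxs : x ∈ s₁ ∩ s₂ := hcap.symm ▸ rfl
  set f₁ : G →g F := (SimpleGraph.Embedding.induce s₁).toHom.comp e₁.toHom with hf₁def
  set f₂ : G →g F := (SimpleGraph.Embedding.induce s₂).toHom.comp e₂.toHom with hf₂def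
  have hg₁ : ∀ z, f₁ z = ↑(e₁ z) := fun z => rfl
  have hg₂ : ∀ z, f₂ z = ↑(e₂ z) := fun z => rfl
  have hf₁inj : Function.Injective ⇑f₁ := by
    intro a b hab
    rw [hg₁, hg₁] at hab
    exact e₁.toEquiv.injective (Subtype.coe_injective hab)
  have hf₂inj : Function.Injective ⇑f₂ := by
    intro a b hab
    rw [hg₂, hg₂] at hab
    exact e₂.toEquiv.injective (Subtype.coe_injective hab)
  have hr₁ : ∀ z, f₁ z ∈ s₁ := fun z => (e₁ z).2
  have hr₂ : ∀ z, f₂ z ∈ s₂ := fun z => (e₂ z).2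
  have hx₁f : f₁ x₀ = x := he₁
  have hx₂f : f₂ x₀ = x := he₂
  have hs12 : ∀ z, z ∈ s₁ → z ∈ s₂ → z = x := fun z h1 h2 => by
    have : z ∈ s₁ ∩ s₂ := ⟨h1, h2⟩
    rwa [hcap] at this
  have h1x : f₁ y ≠ x := fun h => hy (hf₁inj (h.trans hx₁f.symm))
  have h2x : f₂ y ≠ x := fun h => hy (hf₂inj (h.trans hx₂f.symm))
  have h2s1 : f₂ y ∉ s₁ := fun h => h2x (hs12 _ h (hr₂ y))
  have hne12 : f₁ y ≠ f₂ y := fun h => h2s1 (h ▸ hr₁ y)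
  have hns : ¬ s₂ ⊆ s₁ := by
    intro hsub
    have h2 : s₂ = {x} := by
      rw [← hcap, Set.inter_eq_self_of_subset_right hsub]
    have e' : V ≃ (s₂ : Set W) := e₂.toEquiv
    rw [h2] at e'
    have hcard1 : Nat.card V = 1 := by
      rw [Nat.card_congr e', Nat.card_unique]
    have hcard3 : 3 ≤ Fintype.card V := hG2.1
    rw [Nat.card_eq_fintype_card] at hcard1
    omega
  have hnadj : ¬ F.Adj (f₁ y) (f₂ y) := by
    intro hadj
    have hxsup := cross_through_cut hs₁ hs₂ hcap hns (hr₁ y) h1x (hr₂ y) h2x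
      (Walk.cons hadj Walk.nil)
    rw [Walk.support_cons, Walk.support_nil] at hxsup
    rcases List.mem_cons.mp hxsup with h | h
    · exact h1x h.symm
    · rw [List.mem_singleton] at h
      exact h2x h.symm
  obtain ⟨c, hcC, huniq⟩ := hF.2 (f₁ y) (f₂ y) hne12 hnadj
  obtain ⟨v0, w, hwcyc, hwlen, hwset⟩ := hcC
  have hew : s(f₁ y, f₂ y) ∈ w.edges := by
    by_contra hnot
    have hsubF : ∀ e ∈ w.edges, e ∈ F.edgeSet := by
      intro e he'
      have h' := w.edges_subset_edgeSet he'
      rw [edgeSet_sup, edgeSet_fromEdgeSet] at h'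
      rcases h' with h' | ⟨h', -⟩
      · exact h'
      · rw [Set.mem_singleton_iff] at h'
        exact absurd (h' ▸ he') hnot
    exact hF.1 ⟨v0, w.transfer F hsubF, hwcyc.transfer _,
      by rw [Walk.length_transfer]; exact hwlen⟩
  have hy₁w : f₁ y ∈ w.support := w.fst_mem_support_of_mem_edges hew
  set w₁ := w.rotate (f₁ y) hy₁w with hw₁def
  have hcyc₁ : w₁.IsCycle := hwcyc.rotate hy₁w
  have hmemrot : ∀ ed, ed ∈ w₁.edges ↔ ed ∈ w.edges := fun ed =>
    (w.rotate_edges (f₁ y) hy₁w).mem_iff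
  have hlen₁ : w₁.length = t := by
    have hh := (w.rotate_edges (f₁ y) hy₁w).perm.length_eq
    rw [Walk.length_edges, Walk.length_edges] at hh
    rw [hh]
    exact hwlen
  obtain ⟨q, hqpath, hqlen, hqnot, hqset⟩ := cycle_split hcyc₁ ((hmemrot _).mpr hew)
  have hsubF : ∀ e ∈ q.edges, e ∈ F.edgeSet := by
    intro e he'
    have h' := q.edges_subset_edgeSet he'
    rw [edgeSet_sup, edgeSet_fromEdgeSet] at h'
    rcases h' with h' | ⟨h', -⟩
    · exact h'
    · rw [Set.mem_singleton_iff] at h'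
      exact absurd (h' ▸ he') hqnot
  set qF := q.transfer F hsubF with hqFdef
  have hqFpath : qF.IsPath := hqpath.transfer hsubF
  have hqFedges : qF.edges = q.edges := Walk.edges_transfer _ _
  have hqFlen : qF.length = q.length := Walk.length_transfer _ _
  have hxq : x ∈ qF.support := by
    have hh := cross_through_cut hs₁ hs₂ hcap hns (hr₁ y) h1x (hr₂ y) h2x qF.reverse
    rwa [Walk.support_reverse, List.mem_reverse] at hh
  set tk := qF.takeUntil x hxq with htkdef
  set dp := qF.dropUntil x hxq with hdpdef
  have htkpath : tk.IsPath := hqFpath.takeUntil hxq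
  have hdppath : dp.IsPath := hqFpath.dropUntil hxq
  have htks : ∀ z ∈ tk.support, z ∈ s₂ := walk_in_block hs₂ (hr₂ y) hxs.2 h2x tk htkpath
  have hdps : ∀ z ∈ dp.support, z ∈ s₁ :=
    walk_in_block hs₁ hxs.1 (hr₁ y) (Ne.symm h1x) dp hdppath
  have hlensum : tk.length + dp.length = qF.length := by
    have hh := congrArg Walk.length (qF.take_spec hxq)
    rw [Walk.length_append] at hh
    exact hh
  have hqsplit : ∀ ed, ed ∈ qF.edges ↔ (ed ∈ tk.edges ∨ ed ∈ dp.edges) := by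
    intro ed
    have hh := congrArg Walk.edges (qF.take_spec hxq)
    rw [Walk.edges_append] at hh
    rw [← hh, List.mem_append]
  -- pull back `tk` to `G`
  have hy₂s : f₂ y ∈ s₂ := hr₂ y
  have hAeq : e₂.symm ⟨f₂ y, hy₂s⟩ = y := by
    have hh : (⟨f₂ y, hy₂s⟩ : s₂) = e₂ y := Subtype.ext rfl
    rw [hh, e₂.symm_apply_apply]
  have hBeq : e₂.symm ⟨x, hxs.2⟩ = x₀ := by
    have hh : (⟨x, hxs.2⟩ : s₂) = e₂ x₀ := Subtype.ext he₂.symm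
    rw [hh, e₂.symm_apply_apply]
  set P₂ : G.Walk y x₀ :=
    ((induceWalk tk htks hy₂s hxs.2).map e₂.symm.toHom).copy hAeq hBeq with hP₂def
  have hP₂path : P₂.IsPath := by
    rw [hP₂def, Walk.isPath_copy]
    exact Walk.map_isPath_of_injective (e₂.symm.toEquiv.injective)
      (induceWalk_isPath _ _ _ _ htkpath)
  have hP₂len : P₂.length = tk.length := by
    rw [hP₂def, Walk.length_copy, Walk.length_map, induceWalk_length]
  have hP₂edges : ∀ ed, ed ∈ (P₂.map f₂).edges ↔ ed ∈ tk.edges := by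
    intro ed
    have hh := pull_edges e₂ f₂ hg₂ tk htks hy₂s hxs.2
    rw [hP₂def, Walk.map_copy, Walk.edges_copy, hh]
  -- pull back `dp` to `G`
  have hy₁s : f₁ y ∈ s₁ := hr₁ y
  have hCeq : e₁.symm ⟨x, hxs.1⟩ = x₀ := by
    have hh : (⟨x, hxs.1⟩ : s₁) = e₁ x₀ := Subtype.ext he₁.symm
    rw [hh, e₁.symm_apply_apply]
  have hDeq : e₁.symm ⟨f₁ y, hy₁s⟩ = y := by
    have hh : (⟨f₁ y, hy₁s⟩ : s₁) = e₁ y := Subtype.ext rfl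
    rw [hh, e₁.symm_apply_apply]
  set P₁r : G.Walk x₀ y :=
    ((induceWalk dp hdps hxs.1 hy₁s).map e₁.symm.toHom).copy hCeq hDeq with hP₁rdef
  set P₁ : G.Walk y x₀ := P₁r.reverse with hP₁def
  have hP₁path : P₁.IsPath := by
    rw [hP₁def]
    apply Walk.IsPath.reverse
    rw [hP₁rdef, Walk.isPath_copy]
    exact Walk.map_isPath_of_injective (e₁.symm.toEquiv.injective)
      (induceWalk_isPath _ _ _ _ hdppath)
  have hP₁len : P₁.length = dp.length := by
    rw [hP₁def, Walk.length_reverse, hP₁rdef, Walk.length_copy, Walk.length_map,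
      induceWalk_length]
  have hP₁edges : ∀ ed, ed ∈ (P₁.map f₁).edges ↔ ed ∈ dp.edges := by
    intro ed
    have hh := pull_edges e₁ f₁ hg₁ dp hdps hxs.1 hy₁s
    rw [hP₁def, ← Walk.reverse_map, Walk.edges_reverse, List.mem_reverse, hP₁rdef,
      Walk.map_copy, Walk.edges_copy, hh]
  -- identify the unique edge set
  have hcE : c = {ed | ed = s(f₁ y, f₂ y) ∨ ed ∈ (P₁.map f₁).edges ∨ ed ∈ (P₂.map f₂).edges} := by
    rw [← hwset]
    ext ed
    simp only [Set.mem_setOf_eq]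
    rw [← hmemrot ed, hqset ed]
    constructor
    · rintro (rfl | hh)
      · exact Or.inl rfl
      · have hq' : ed ∈ qF.edges := by rw [hqFedges]; exact hh
        rcases (hqsplit ed).mp hq' with h | h
        · exact Or.inr (Or.inr ((hP₂edges ed).mpr h))
        · exact Or.inr (Or.inl ((hP₁edges ed).mpr h))
    · rintro (rfl | hh | hh)
      · exact Or.inl rfl
      · refine Or.inr ?_
        have hq' : ed ∈ qF.edges := (hqsplit ed).mpr (Or.inr ((hP₁edges ed).mp hh))
        rwa [hqFedges] at hq'
      · refine Or.inr ?_
        have hq' : ed ∈ qF.edges := (hqsplit ed).mpr (Or.inl ((hP₂edges ed).mp hh))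
        rwa [hqFedges] at hq'
  have hsumlen : P₂.length + P₁.length + 1 = t := by
    rw [hP₂len, hP₁len]
    omega
  have hswap := mkCycle hcap f₁ f₂ hr₁ hr₂ hx₁f hx₂f hf₁inj hf₂inj hy P₂ P₁
    hP₂path hP₁path hsumlen
  have hceq := huniq _ hswap
  have hPP : P₂ = P₁ := E_inj hcap f₁ f₂ hr₁ hr₂ hx₁f hx₂f hf₁inj hf₂inj hy
    P₂ P₁ P₁ P₂ hP₂path hP₁path (hceq.trans hcE)
  have hlreq : P₂.length = P₁.length := congrArg Walk.length hPP
  have hlenP : P₁.length = k := by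
    rw [hP₂len, hP₁len] at hlreq
    omega
  have hm : (t + 1) / 2 - 1 = k := by omega
  refine ⟨P₁, ⟨hP₁path, by rw [hm, hlenP]⟩, ?_⟩
  rintro p' ⟨hp'path, hp'len⟩
  have hsumlen' : p'.length + P₁.length + 1 = t := by
    rw [hp'len, hlenP, hm]
    omega
  have hnew := mkCycle hcap f₁ f₂ hr₁ hr₂ hx₁f hx₂f hf₁inj hf₂inj hy p' P₁
    hp'path hP₁path hsumlen'
  have hceq' := huniq _ hnew
  exact E_inj hcap f₁ f₂ hr₁ hr₂ hx₁f hx₂f hf₁inj hf₂inj hy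
    p' P₁ P₁ P₂ hp'path hP₁path (hceq'.trans hcE)
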